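/- arXiv:1804.05297 — 2 statements merged into one kernel-verified Lean document; each statement's English description precedes it below -/
import Mathlib

section
/- Let (g_v)_{v ∈ ℤ_{≥0}^N} be a family of formal power series in K[[x_1, …, x_N]]. Then the following are equivalent: (a) there exist real numbers r, s > 1 such that every g_v · v! lies in K{r^{-1}x} and ‖g_v · v!‖_r · s^{|v|} is bounded over v; (b) there exist real numbers r, s > 1 such that every g_v · π^{|v|} lies in K{r^{-1}x} and ‖g_v · π^{|v|}‖_r · s^{|v|} is bounded over v. (This is the identity 𝔅^† = 𝒟^†, where 𝔅^† is the set of operators Σ_v f_v(x) ∂^v/v! and 𝒟^† the set of operators Σ_v f_v(x) ∂^v/π^{|v|}, with f_v ∈ K{r^{-1}x} and ‖f_v‖_r s^{|v|} bounded for some r, s > 1; it is the key step in identifying 𝒟^† with Γ(ℙ^N, 𝒟^†_{ℙ^N,ℚ}(∞)).) -/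
open scoped BigOperators

/-- A family of formal power series in `N` variables, given by its coefficients:
`g v u` is the coefficient of `x^u` in the series `g_v`. -/
abbrev CoeffFamily (N : ℕ) (K : Type*) := (Fin N → ℕ) → (Fin N → ℕ) → K


lemma aux_charZero (p : ℕ) (hp : p.Prime) (K : Type*) [NormedField K]
    (hnormp : ‖(p : K)‖ = ((p : ℝ))⁻¹) : CharZero K := by
  have hplt : ((p:ℝ))⁻¹ < 1 := by
    rw [inv_lt_one_iff₀]; right; exact_mod_cast hp.one_lt
  have hp0 : (0:ℝ) < (p:ℝ) := by exact_mod_cast hp.pos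
  have hppos : (0:ℝ) < ((p:ℝ))⁻¹ := by positivity
  rcases CharP.exists K with ⟨q, hq⟩
  rcases Nat.eq_zero_or_pos q with rfl | hqpos
  · exact CharP.charP_to_charZero K
  · exfalso
    haveI := hq
    haveI : NeZero q := ⟨hqpos.ne'⟩
    have hqprime : q.Prime := CharP.char_is_prime_of_pos K q |>.out
    have : Fact q.Prime := ⟨hqprime⟩
    -- (p : K) ≠ 0 since its norm is nonzero
    have hpK : (p : K) ≠ 0 := by
      intro h; rw [h, norm_zero] at hnormp; exact hppos.ne (by rw [hnormp])
    have hqp : q ≠ p := by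
      intro h; subst h
      exact hpK (CharP.cast_eq_zero K q)
    -- p as element of ZMod q is nonzero
    have hpz : ((p : ZMod q)) ≠ 0 := by
      rw [Ne, ZMod.natCast_eq_zero_iff]
      intro hdvd
      exact hqp ((Nat.prime_dvd_prime_iff_eq hqprime hp).mp hdvd)
    have hfermat : ((p : ZMod q)) ^ (q - 1) = 1 := ZMod.pow_card_sub_one_eq_one hpz
    have hhom : ((ZMod.castHom (dvd_refl q) K) : ZMod q →+* K) ((p : ZMod q) ^ (q-1)) = 1 := by
      rw [hfermat, map_one]
    rw [map_pow, map_natCast] at hhom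
    have : ‖(p:K)‖ ^ (q-1) = 1 := by rw [← norm_pow, hhom, norm_one]
    rw [hnormp] at this
    have h1 : ((p:ℝ))⁻¹ ^ (q-1) < 1 := pow_lt_one₀ hppos.le hplt (Nat.sub_ne_zero_of_lt hqprime.one_lt)
    rw [this] at h1; exact lt_irrefl 1 h1

lemma aux_norm_rat (p : ℕ) (hp : p.Prime) (K : Type*) [NormedField K] [CharZero K]
    (hnormp : ‖(p : K)‖ = ((p : ℝ))⁻¹) :
    ∀ x : ℚ, ‖((x : ℚ) : K)‖ = ((padicNorm p x : ℚ) : ℝ) := by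
  haveI : Fact p.Prime := ⟨hp⟩
  have hp0 : (0:ℝ) < (p:ℝ) := by exact_mod_cast hp.pos
  have hinvlt : ((p:ℝ))⁻¹ < 1 := by
    rw [inv_lt_one_iff₀]; right; exact_mod_cast hp.one_lt
  have hinvpos : (0:ℝ) < ((p:ℝ))⁻¹ := by positivity
  set f : MulRingNorm ℚ :=
    { toFun := fun x => ‖((x : ℚ) : K)‖
      map_zero' := by simp
      add_le' := fun x y => by push_cast; exact norm_add_le _ _
      neg' := fun x => by push_cast; simp
      map_one' := by simp
      map_mul' := fun x y => by push_cast; exact norm_mul _ _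
      eq_zero_of_map_eq_zero' := fun x h => by
        have : ((x:ℚ):K) = 0 := norm_eq_zero.mp h
        exact_mod_cast this } with hf
  have hfp : f (p : ℚ) = ((p:ℝ))⁻¹ := by
    have h1 : f ((p:ℕ) : ℚ) = ‖(((p:ℕ):ℚ) : K)‖ := rfl
    rw [h1, Rat.cast_natCast, hnormp]
  have hfnontriv : f ≠ 1 := by
    intro h
    have : f (p:ℚ) = 1 := by
      rw [h]; simp [MulRingNorm.apply_one]
      exact_mod_cast hp.ne_zero
    rw [hfp] at this
    exact hinvlt.ne this
  obtain h | ⟨q, ⟨⟨hq⟩, c, hc, hfc⟩, _⟩ : (∃ c : ℝ, 0 < c ∧ (fun x => f x ^ c) = ⇑Rat.AbsoluteValue.real) ∨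
      ∃! q : ℕ, ∃ (_ : Fact q.Prime), ∃ c : ℝ, 0 < c ∧ (fun x => f x ^ c) = ⇑(Rat.AbsoluteValue.padic q) := by
    let F : AbsoluteValue ℚ ℝ := MulRingNorm.mulRingNormEquivAbsoluteValue f
    have hF : ∀ x, F x = f x := fun x => rfl
    have hnt : F.IsNontrivial :=
      ⟨(p:ℚ), by exact_mod_cast hp.ne_zero, by rw [hF, hfp]; exact hinvlt.ne⟩
    rcases Rat.AbsoluteValue.equiv_real_or_padic F hnt with h | ⟨q, ⟨hq, hqe⟩, huniq⟩
    · left; exact (AbsoluteValue.isEquiv_iff_exists_rpow_eq (v := F)).mp h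
    · right
      refine ⟨q, ⟨hq, (AbsoluteValue.isEquiv_iff_exists_rpow_eq (v := F)).mp hqe⟩, ?_⟩
      rintro y ⟨hy, hye⟩
      exact huniq y ⟨hy, (AbsoluteValue.isEquiv_iff_exists_rpow_eq (v := F)).mpr hye⟩
  · -- archimedean case impossible
    exfalso
    obtain ⟨c, hc, hfc⟩ := h
    have h2 := congrFun hfc ((p:ℕ):ℚ)
    rw [hfp] at h2
    have h3 : Rat.AbsoluteValue.real ((p:ℕ):ℚ) = |(((p:ℕ):ℚ):ℝ)| := by
      rw [Rat.AbsoluteValue.real_eq_abs, Rat.cast_abs]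
    rw [h3] at h2
    have h4 : |(((p:ℕ):ℚ):ℝ)| = (p:ℝ) := by
      push_cast
      exact abs_of_pos hp0
    rw [h4] at h2
    have h5 : ((p:ℝ))⁻¹ ^ c ≤ 1 := Real.rpow_le_one hinvpos.le hinvlt.le hc.le
    have h6 : (1:ℝ) < (p:ℝ) := by exact_mod_cast hp.one_lt
    rw [h2] at h5
    linarith
  · -- padic case: identify q = p and c = 1
    haveI : Fact q.Prime := ⟨hq⟩
    have h2 := congrFun hfc ((p:ℕ):ℚ)
    rw [hfp] at h2
    have h3 : Rat.AbsoluteValue.padic q ((p:ℕ):ℚ) = ((padicNorm q ((p:ℕ):ℚ) : ℚ):ℝ) := rfl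
    rw [h3] at h2
    have hqp : q = p := by
      by_contra hne
      have hnd : ¬ ((q:ℤ) ∣ ((p:ℕ):ℤ)) := by
        rw [Int.natCast_dvd_natCast]
        exact fun hdvd => hne ((Nat.prime_dvd_prime_iff_eq hq hp).mp hdvd)
      have hone : padicNorm q ((p:ℕ):ℚ) = 1 := by
        have := padicNorm.int_eq_one_iff (p := q) ((p:ℕ):ℤ)
        rw [padicNorm.int_eq_one_iff] at *
        push_cast
        exact (padicNorm.int_eq_one_iff (p := q) ((p:ℕ):ℤ)).mpr hnd
      rw [hone] at h2
      have hne1 : ((p:ℝ))⁻¹ ^ c ≠ 1 := by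
        intro habs
        have := Real.rpow_lt_one hinvpos.le hinvlt hc
        rw [habs] at this; exact lt_irrefl 1 this
      exact hne1 (by exact_mod_cast h2)
    subst hqp
    have hpn : padicNorm q ((q:ℕ):ℚ) = ((q:ℚ))⁻¹ := by
      exact_mod_cast padicNorm.padicNorm_p_of_prime (p := q)
    rw [hpn] at h2
    have hq0 : (0:ℝ) < (q:ℝ) := by exact_mod_cast hq.pos
    have hc1 : c = 1 := by
      have hlog := congrArg Real.log h2
      rw [Real.log_rpow (by positivity)] at hlog
      have hlogne : Real.log ((q:ℝ))⁻¹ ≠ 0 := by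
        rw [Real.log_inv]
        simp only [ne_eq, neg_eq_zero]
        have : (1:ℝ) < (q:ℝ) := by exact_mod_cast hq.one_lt
        exact (Real.log_pos this).ne'
      push_cast at hlog
      have h1 : c * Real.log ((q:ℝ))⁻¹ = 1 * Real.log ((q:ℝ))⁻¹ := by rw [hlog, one_mul]
      exact mul_right_cancel₀ hlogne h1
    intro x
    have hx := congrFun hfc x
    rw [hc1, Real.rpow_one] at hx
    exact hx

lemma aux_norm_nat (p : ℕ) (hp : p.Prime) (K : Type*) [NormedField K]
    (hnorm : ∀ x : ℚ, ‖((x : ℚ) : K)‖ = ((padicNorm p x : ℚ) : ℝ)) :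
    ∀ n : ℕ, n ≠ 0 → ‖((n : ℕ) : K)‖ = (((p:ℝ) ^ padicValNat p n))⁻¹ := by
  haveI : Fact p.Prime := ⟨hp⟩
  intro n hn
  have h1 : ((n:ℕ):K) = (((n:ℕ):ℚ) : K) := by push_cast; ring
  rw [h1, hnorm]
  rw [padicNorm.eq_zpow_of_nonzero (by exact_mod_cast hn)]
  push_cast
  rw [zpow_neg, ← padicValRat_of_nat, zpow_natCast]

/-- digit-sum bound: `p ^ digitsum ≤ (p * (n+1)) ^ (p-1)` -/
lemma aux_digit_sum (p n : ℕ) (hp : p.Prime) :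
    p ^ ((p.digits n).sum) ≤ (p * (n + 1)) ^ (p - 1) := by
  rcases Nat.eq_zero_or_pos n with rfl | hn
  · simp only [Nat.digits_zero, List.sum_nil, pow_zero]
    exact Nat.one_le_pow _ _ (by have := hp.pos; omega)
  · have hb : 1 < p := hp.one_lt
    have hlen : (p.digits n).length = Nat.log p n + 1 := Nat.digits_len p n hb hn.ne'
    have hsum : (p.digits n).sum ≤ (p.digits n).length * (p - 1) := by
      have := List.sum_le_card_nsmul (p.digits n) (p - 1) (fun x hx => by
        have := Nat.digits_lt_base hb hx
        omega)
      simpa [smul_eq_mul, mul_comm] using this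
    calc p ^ ((p.digits n).sum) ≤ p ^ ((p.digits n).length * (p - 1)) :=
          Nat.pow_le_pow_right hp.pos hsum
      _ = (p ^ (p.digits n).length) ^ (p - 1) := by rw [pow_mul]
      _ ≤ (p * (n + 1)) ^ (p - 1) := by
          apply Nat.pow_le_pow_left
          rw [hlen, pow_succ, mul_comm]
          exact Nat.mul_le_mul_left p (le_trans (Nat.pow_log_le_self p hn.ne') (Nat.le_succ n))

lemma aux_fact_bounds (p : ℕ) (hp : p.Prime) (K : Type*) [NormedField K]
    (hnorm : ∀ n : ℕ, n ≠ 0 → ‖((n : ℕ) : K)‖ = (((p:ℝ) ^ padicValNat p n))⁻¹)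
    (hnormp : ‖(p : K)‖ = ((p : ℝ))⁻¹)
    (π : K) (hπ : π ^ (p - 1) = -(p : K)) :
    ∀ n : ℕ, ‖π‖ ^ n ≤ ‖((n.factorial : ℕ) : K)‖ ∧
      ‖((n.factorial : ℕ) : K)‖ ≤ (p:ℝ) * (n + 1) * ‖π‖ ^ n := by
  haveI : Fact p.Prime := ⟨hp⟩
  set a : ℝ := (p:ℝ) with ha
  have ha1 : 1 < a := by rw [ha]; exact_mod_cast hp.one_lt
  have ha0 : 0 < a := by linarith
  set d := p - 1 with hdd
  have hd : d ≠ 0 := by have := hp.one_lt; omega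
  have hPd : ‖π‖ ^ d = a⁻¹ := by
    rw [← norm_pow, hπ, norm_neg, hnormp]
  have hP0 : 0 < ‖π‖ := by
    rcases (norm_nonneg π).lt_or_eq with h | h
    · exact h
    · exfalso
      rw [← h, zero_pow hd] at hPd
      have : (0:ℝ) < a⁻¹ := by positivity
      rw [← hPd] at this; exact lt_irrefl 0 this
  intro n
  set V := padicValNat p n.factorial with hV
  set s := (p.digits n).sum with hs
  have hleg : d * V = n - s := sub_one_mul_padicValNat_factorial n
  have hsle : s ≤ n := Nat.digit_sum_le p n
  have hVn : d * V + s = n := by omega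
  have hfact : ‖((n.factorial : ℕ) : K)‖ = (a ^ V)⁻¹ :=
    hnorm _ n.factorial_ne_zero
  have hdig : a ^ s ≤ (a * (n + 1)) ^ d := by
    have := aux_digit_sum p n hp
    have h2 : ((p ^ ((p.digits n).sum) : ℕ) : ℝ) ≤ (((p * (n + 1)) ^ (p - 1) : ℕ) : ℝ) :=
      Nat.cast_le.mpr this
    push_cast at h2
    convert h2 using 2
  constructor
  · rw [hfact]
    apply le_of_pow_le_pow_left₀ hd (by positivity)
    have e1 : (‖π‖ ^ n) ^ d = (a ^ n)⁻¹ := by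
      rw [← pow_mul, mul_comm n d, pow_mul, hPd, inv_pow]
    have e2 : ((a ^ V)⁻¹) ^ d = (a ^ (d * V))⁻¹ := by
      rw [← inv_pow, ← pow_mul, mul_comm V d, inv_pow]
    rw [e1, e2]
    apply inv_anti₀ (by positivity)
    exact pow_le_pow_right₀ ha1.le (by omega)
  · rw [hfact]
    apply le_of_pow_le_pow_left₀ hd (by positivity)
    have e2 : ((a ^ V)⁻¹) ^ d = (a ^ (d * V))⁻¹ := by
      rw [← inv_pow, ← pow_mul, mul_comm V d, inv_pow]
    have e3 : (a * (↑n + 1) * ‖π‖ ^ n) ^ d = (a * (n+1)) ^ d * (a ^ n)⁻¹ := by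
      rw [mul_pow, ← pow_mul, mul_comm n d, pow_mul, hPd, inv_pow]
    rw [e2, e3]
    have hpow : a ^ n = a ^ (d * V) * a ^ s := by rw [← pow_add, hVn]
    have e4 : (a ^ (d * V))⁻¹ = a ^ s / a ^ n := by
      rw [hpow]; field_simp
    rw [e4]
    calc a ^ s / a ^ n ≤ (a * (n+1)) ^ d / a ^ n := by
          apply div_le_div_of_nonneg_right ?_ (by positivity)
          · exact hdig
      _ = (a * (n+1)) ^ d * (a ^ n)⁻¹ := by rw [div_eq_mul_inv]

/-- `𝔅^† = 𝒟^†`: for a family `(g_v)` of formal power series over a finite extension `K` of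
`ℚ_p` (with `π^(p-1) = -p`), there exist `r, s > 1` such that every `g_v · v!` lies in
`K{r⁻¹x}` with `‖g_v · v!‖_r s^{|v|}` bounded, if and only if there exist `r, s > 1` such that
every `g_v · π^{|v|}` lies in `K{r⁻¹x}` with `‖g_v · π^{|v|}‖_r s^{|v|}` bounded. -/
theorem stmt5 (p N : ℕ) (hp : p.Prime)
    (K : Type*) [NormedField K]
    (hnormp : ‖(p : K)‖ = ((p : ℝ))⁻¹)
    (π : K) (hπ : π ^ (p - 1) = -(p : K))
    (g : CoeffFamily N K) :
    (∃ r s : ℝ, 1 < r ∧ 1 < s ∧ ∃ C : ℝ, ∀ v u : Fin N → ℕ,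
        ‖((∏ j, (v j).factorial : ℕ) : K) * g v u‖ * r ^ (∑ j, u j) * s ^ (∑ j, v j) ≤ C) ↔
    (∃ r s : ℝ, 1 < r ∧ 1 < s ∧ ∃ C : ℝ, ∀ v u : Fin N → ℕ,
        ‖π ^ (∑ j, v j) * g v u‖ * r ^ (∑ j, u j) * s ^ (∑ j, v j) ≤ C) := by
  haveI : CharZero K := aux_charZero p hp K hnormp
  have hrat := aux_norm_rat p hp K hnormp
  have hnat := aux_norm_nat p hp K hrat
  have hfb := aux_fact_bounds p hp K hnat hnormp π hπ
  have hprodcast : ∀ v : Fin N → ℕ,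
      ‖((∏ j, (v j).factorial : ℕ) : K)‖ = ∏ j, ‖(((v j).factorial : ℕ) : K)‖ := by
    intro v
    rw [show (((∏ j, (v j).factorial : ℕ)) : K) = ∏ j, (((v j).factorial : ℕ) : K) by
      push_cast; rfl]
    exact norm_prod _ _
  constructor
  · rintro ⟨r, s, hr, hs, C, hC⟩
    refine ⟨r, s, hr, hs, C, fun v u => ?_⟩
    have h1 : ‖π ^ (∑ j, v j) * g v u‖ ≤ ‖((∏ j, (v j).factorial : ℕ) : K) * g v u‖ := by
      rw [norm_mul, norm_mul, norm_pow]
      apply mul_le_mul_of_nonneg_right ?_ (norm_nonneg _)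
      rw [hprodcast v, ← Finset.prod_pow_eq_pow_sum]
      exact Finset.prod_le_prod (fun j _ => by positivity) (fun j _ => (hfb (v j)).1)
    calc ‖π ^ (∑ j, v j) * g v u‖ * r ^ (∑ j, u j) * s ^ (∑ j, v j)
        ≤ ‖((∏ j, (v j).factorial : ℕ) : K) * g v u‖ * r ^ (∑ j, u j) * s ^ (∑ j, v j) := by
          apply mul_le_mul_of_nonneg_right (mul_le_mul_of_nonneg_right h1 (by positivity))
            (by positivity)
      _ ≤ C := hC v u
  · rintro ⟨r, s, hr, hs, C, hC⟩
    have hs0 : (0:ℝ) < s := by linarith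
    set σ := Real.sqrt s with hσ
    have hσ1 : 1 < σ := by
      rw [hσ]
      rw [show (1:ℝ) = Real.sqrt 1 by simp]
      exact Real.sqrt_lt_sqrt (by norm_num) hs
    have hσ0 : 0 < σ := by linarith
    have hσsq : σ ^ 2 = s := Real.sq_sqrt hs0.le
    set x := σ - 1 with hxdef
    have hx0 : 0 < x := by simp [hxdef]; linarith
    set B := 1 + x⁻¹ with hBdef
    have hB1 : 1 ≤ B := by
      have : 0 < x⁻¹ := by positivity
      simp [hBdef]; linarith
    have hkey : ∀ n : ℕ, (n:ℝ) + 1 ≤ B * σ ^ n := by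
      intro n
      have hbern : 1 + (n:ℝ) * x ≤ (1 + x) ^ n := one_add_mul_le_pow (by linarith) n
      have hσx : σ = 1 + x := by simp [hxdef]
      rw [hσx]
      have hBx : B * x = x + 1 := by
        rw [hBdef]; field_simp
      nlinarith [mul_le_mul_of_nonneg_left hbern (le_trans zero_le_one hB1),
        Nat.cast_nonneg (α := ℝ) n]
    have hp1 : (1:ℝ) < (p:ℝ) := by exact_mod_cast hp.one_lt
    have hB0 : (0:ℝ) < B := lt_of_lt_of_le one_pos hB1
    obtain ⟨A, hAdef⟩ : ∃ A : ℝ, A = (p:ℝ) * B := ⟨_, rfl⟩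
    have hA0 : 0 < A := by rw [hAdef]; exact mul_pos (lt_trans one_pos hp1) hB0
    -- per-coordinate bound
    have hj : ∀ n : ℕ, ‖((n.factorial : ℕ) : K)‖ * σ ^ n ≤ A * (‖π‖ ^ n * s ^ n) := by
      intro n
      have h2 := (hfb n).2
      have h3 : ‖((n.factorial : ℕ) : K)‖ * σ ^ n ≤ ((p:ℝ) * (n + 1) * ‖π‖ ^ n) * σ ^ n :=
        mul_le_mul_of_nonneg_right h2 (by positivity)
      refine h3.trans ?_
      have h4 : ((n:ℝ) + 1) * σ ^ n ≤ B * σ ^ n * σ ^ n :=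
        mul_le_mul_of_nonneg_right (hkey n) (by positivity)
      have h5 : σ ^ n * σ ^ n = s ^ n := by
        rw [← pow_add, ← two_mul, pow_mul, hσsq]
      have h6 := mul_le_mul_of_nonneg_right h4 (pow_nonneg (norm_nonneg π) n)
      have h7 := mul_le_mul_of_nonneg_left h6 (le_of_lt (lt_trans one_pos hp1))
      calc (p:ℝ) * (↑n + 1) * ‖π‖ ^ n * σ ^ n
          = (p:ℝ) * ((↑n + 1) * σ ^ n * ‖π‖ ^ n) := by ring
        _ ≤ (p:ℝ) * (B * σ ^ n * σ ^ n * ‖π‖ ^ n) := h7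
        _ = (p:ℝ) * B * (‖π‖ ^ n * (σ ^ n * σ ^ n)) := by ring
        _ = A * (‖π‖ ^ n * s ^ n) := by rw [h5, hAdef]
    refine ⟨r, σ, hr, hσ1, C * A ^ N, fun v u => ?_⟩
    have hprodle : (∏ j, ‖(((v j).factorial : ℕ) : K)‖) * σ ^ (∑ j, v j)
        ≤ A ^ N * (‖π‖ ^ (∑ j, v j) * s ^ (∑ j, v j)) := by
      have e1 : (∏ j, ‖(((v j).factorial : ℕ) : K)‖) * σ ^ (∑ j, v j)
          = ∏ j, (‖(((v j).factorial : ℕ) : K)‖ * σ ^ (v j)) := by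
        rw [Finset.prod_mul_distrib, Finset.prod_pow_eq_pow_sum]
      have e2 : (∏ j : Fin N, (A * (‖π‖ ^ (v j) * s ^ (v j))))
          = A ^ N * (‖π‖ ^ (∑ j, v j) * s ^ (∑ j, v j)) := by
        rw [Finset.prod_mul_distrib, Finset.prod_const, Finset.card_univ, Fintype.card_fin,
          Finset.prod_mul_distrib, Finset.prod_pow_eq_pow_sum, Finset.prod_pow_eq_pow_sum]
      rw [e1, ← e2]
      exact Finset.prod_le_prod (fun j _ => by positivity) (fun j _ => hj (v j))
    calc ‖((∏ j, (v j).factorial : ℕ) : K) * g v u‖ * r ^ (∑ j, u j) * σ ^ (∑ j, v j)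
        = ((∏ j, ‖(((v j).factorial : ℕ) : K)‖) * σ ^ (∑ j, v j)) * (‖g v u‖ * r ^ (∑ j, u j)) := by
          rw [norm_mul, hprodcast v]; ring
      _ ≤ (A ^ N * (‖π‖ ^ (∑ j, v j) * s ^ (∑ j, v j))) * (‖g v u‖ * r ^ (∑ j, u j)) := by
          apply mul_le_mul_of_nonneg_right hprodle (by positivity)
      _ = A ^ N * (‖π ^ (∑ j, v j) * g v u‖ * r ^ (∑ j, u j) * s ^ (∑ j, v j)) := by
          rw [norm_mul, norm_pow]; ring
      _ ≤ A ^ N * C := mul_le_mul_of_nonneg_left (hC v u) (by positivity)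
      _ = C * A ^ N := mul_comm _ _
end

section
/- The K-algebra homomorphism φ : K⟨x, y⟩^† → L^{†′} determined by x_i ↦ x_i (i = 1, …, N) and y_j ↦ t^{w_j} (j = 1, …, N), i.e. sending Σ_v f_v(x) y^v to Σ_v f_v(x) t^{v_1 w_1 + ⋯ + v_N w_N}, is surjective. -/
open scoped Pointwise BigOperators

section

variable (n N : ℕ)

/-- The convex polyhedral cone `δ ⊆ ℝ^n` generated by the integer vectors `w_1, …, w_N`. -/
def cone (w : Fin N → Fin n → ℤ) : Set (Fin n → ℝ) :=
  {x | ∃ c : Fin N → ℝ, (∀ j, 0 ≤ c j) ∧ x = ∑ j, c j • fun i => ((w j i : ℝ))}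

/-- The polytope `Δ ⊆ ℝ^n`, the convex hull of `{0, w_1, …, w_N}`. -/
def poly (w : Fin N → Fin n → ℤ) : Set (Fin n → ℝ) :=
  convexHull ℝ (insert 0 (Set.range fun j => fun i => ((w j i : ℝ))))

/-- The gauge `d(x) = inf {a > 0 | x ∈ aΔ}`. -/
noncomputable def dg (w : Fin N → Fin n → ℤ) (x : Fin n → ℝ) : ℝ :=
  sInf {a : ℝ | 0 < a ∧ x ∈ a • poly n N w}

/-- Formal series `Σ a_{v,m} x^v t^m`, by coefficients. -/
abbrev Ser (K : Type*) := ((Fin N → ℕ) × (Fin n → ℤ)) → K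

variable {K : Type*} [NormedField K]

/-- Membership in `K⟨x,y⟩^†`: `b u v` is the coefficient of `x^u y^v`, and
`|b_{u,v}| r^{|u|} s^{|v|}` is bounded for some `r, s > 1`. -/
def memKxy (b : (Fin N → ℕ) × (Fin N → ℕ) → K) : Prop :=
  ∃ r s : ℝ, 1 < r ∧ 1 < s ∧ ∃ C : ℝ, ∀ u v : Fin N → ℕ,
    ‖b (u, v)‖ * r ^ (∑ j, u j) * s ^ (∑ j, v j) ≤ C

/-- Membership in `L^{†′}`: the series is supported (in the `t`-variable) on the monoid
`C(A) = {k_1 w_1 + ⋯ + k_N w_N : k_j ∈ ℤ_{≥0}}` and `|a_{v,m}| r^{|v|} s^{d(m)}` is bounded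
for some `r, s > 1`. -/
def memL' (w : Fin N → Fin n → ℤ) (a : Ser n N K) : Prop :=
  (∀ v m, a (v, m) ≠ 0 → ∃ k : Fin N → ℕ, m = ∑ j, (k j : ℤ) • w j) ∧
  ∃ r s : ℝ, 1 < r ∧ 1 < s ∧ ∃ C : ℝ, ∀ v m,
    ‖a (v, m)‖ * r ^ (∑ j, v j) * s ^ dg n N w (fun i => ((m i : ℝ))) ≤ C

/-- The `K`-algebra homomorphism `φ : K⟨x,y⟩^† → L^{†′}` with `x_i ↦ x_i`, `y_j ↦ t^{w_j}`:
it sends `Σ_v f_v(x) y^v` to `Σ_v f_v(x) t^{v_1 w_1 + ⋯ + v_N w_N}`. -/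
noncomputable def phiMap (w : Fin N → Fin n → ℤ)
    (b : (Fin N → ℕ) × (Fin N → ℕ) → K) : Ser n N K := fun um =>
  ∑' v : Fin N → ℕ, if (∑ j, (v j : ℤ) • w j) = um.2 then b (um.1, v) else 0

end

namespace Stmt10Aux

variable {n N : ℕ}

def WR (w : Fin N → Fin n → ℤ) (j : Fin N) : Fin n → ℝ := fun i => (w j i : ℝ)

def nrmZ (m : Fin n → ℤ) : ℝ := ∑ i, |(m i : ℝ)|

lemma nrmZ_nonneg (m : Fin n → ℤ) : 0 ≤ nrmZ m :=
  Finset.sum_nonneg fun _ _ => abs_nonneg _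

lemma abs_coord_le_nrmZ (m : Fin n → ℤ) (i : Fin n) : |(m i : ℝ)| ≤ nrmZ m := by
  unfold nrmZ
  exact Finset.single_le_sum (f := fun i => |(m i : ℝ)|) (fun _ _ => abs_nonneg _)
    (Finset.mem_univ i)

lemma cast_rep (w : Fin N → Fin n → ℤ) (m : Fin n → ℤ) (k : Fin N → ℕ)
    (hm : m = ∑ j, (k j : ℤ) • w j) :
    (fun i => (m i : ℝ)) = ∑ j, (k j : ℝ) • WR w j := by
  funext i
  have := congrFun hm i
  rw [Finset.sum_apply] at this
  rw [Finset.sum_apply]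
  simp only [Pi.smul_apply, smul_eq_mul] at this ⊢
  rw [this]
  push_cast
  rfl

lemma pigeon (w : Fin N → Fin n → ℤ) (J : Finset (Fin N)) (lam : Fin N → ℝ)
    (hlam0 : ∀ j, 0 ≤ lam j) (hsupp : ∀ j ∉ J, lam j = 0)
    (hsum : ∑ j, lam j = 1) (hrel : ∑ j, lam j • (WR w j) = 0) :
    ∃ h : Fin N → ℕ, (∀ j ∉ J, h j = 0) ∧ h ≠ 0 ∧ ∑ j, (h j : ℤ) • w j = 0 := by
  classical
  have hreli : ∀ i, ∑ j, lam j * (w j i : ℝ) = 0 := by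
    intro i
    have := congrFun hrel i
    rw [Finset.sum_apply] at this
    simpa [WR] using this
  have huniv : (Finset.univ : Finset (Fin N)).Nonempty := by
    rcases Finset.eq_empty_or_nonempty (Finset.univ : Finset (Fin N)) with h | h
    · rw [h] at hsum; simp at hsum
    · exact h
  obtain ⟨js, -, hjs⟩ := Finset.exists_max_image Finset.univ lam huniv
  have hjs' : ∀ j, lam j ≤ lam js := fun j => hjs j (Finset.mem_univ j)
  have hNlam : 1 ≤ (N : ℝ) * lam js := by
    calc (1:ℝ) = ∑ j, lam j := hsum.symm
    _ ≤ ∑ _j : Fin N, lam js := Finset.sum_le_sum fun j _ => hjs' j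
    _ = (N : ℝ) * lam js := by rw [Finset.sum_const]; simp [mul_comm]
  have hlamjs : 0 < lam js := by
    by_contra h
    push_neg at h
    nlinarith [Nat.cast_nonneg (α := ℝ) N]
  obtain ⟨c, hc⟩ := exists_nat_ge (2 / lam js)
  have hc2 : 2 ≤ (c : ℝ) * lam js := by
    rw [div_le_iff₀ hlamjs] at hc
    linarith
  set g : ℕ → Fin N → ℕ := fun T j => ⌊((c * T : ℕ) : ℝ) * lam j⌋₊ with hg
  set rT : ℕ → Fin n → ℤ := fun T => ∑ j, (g T j : ℤ) • w j with hrT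
  set B : ℝ := ∑ j, nrmZ (w j) with hB
  have hBnn : 0 ≤ B := Finset.sum_nonneg fun j _ => nrmZ_nonneg _
  have hrTbound : ∀ T i, |((rT T i : ℤ) : ℝ)| ≤ B := by
    intro T i
    have h1 : ((rT T i : ℤ) : ℝ) = ∑ j, (g T j : ℝ) * (w j i : ℝ) := by
      have h0 : rT T i = ∑ j, (g T j : ℤ) * w j i := by
        simp only [hrT, Finset.sum_apply, Pi.smul_apply, smul_eq_mul]
      rw [h0]
      push_cast
      rfl
    have h2 : ∑ j, ((c * T : ℕ) : ℝ) * lam j * (w j i : ℝ) = 0 := by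
      simp only [mul_assoc, ← Finset.mul_sum]
      rw [hreli i, mul_zero]
    have h3 : ((rT T i : ℤ) : ℝ)
        = ∑ j, ((g T j : ℝ) - ((c * T : ℕ) : ℝ) * lam j) * (w j i : ℝ) := by
      rw [h1]
      rw [eq_comm]
      simp only [sub_mul, Finset.sum_sub_distrib, h2, sub_zero]
    rw [h3]
    calc |∑ j, ((g T j : ℝ) - ((c * T : ℕ) : ℝ) * lam j) * (w j i : ℝ)|
        ≤ ∑ j, |((g T j : ℝ) - ((c * T : ℕ) : ℝ) * lam j) * (w j i : ℝ)| :=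
          Finset.abs_sum_le_sum_abs _ _
      _ ≤ ∑ j, nrmZ (w j) := by
          apply Finset.sum_le_sum
          intro j _
          rw [abs_mul]
          have hx : (0:ℝ) ≤ ((c * T : ℕ) : ℝ) * lam j :=
            mul_nonneg (Nat.cast_nonneg _) (hlam0 j)
          have hfl : |(g T j : ℝ) - ((c * T : ℕ) : ℝ) * lam j| ≤ 1 := by
            rw [abs_le]
            constructor
            · have := Nat.lt_floor_add_one (((c * T : ℕ) : ℝ) * lam j)
              simp only [hg]
              linarith
            · have := Nat.floor_le hx
              simp only [hg]
              linarith
          calc |(g T j : ℝ) - ((c * T : ℕ) : ℝ) * lam j| * |(w j i : ℝ)|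
              ≤ 1 * |(w j i : ℝ)| :=
                mul_le_mul_of_nonneg_right hfl (abs_nonneg _)
            _ = |(w j i : ℝ)| := one_mul _
            _ ≤ nrmZ (w j) := abs_coord_le_nrmZ _ _
  -- pigeonhole
  set zB : ℤ := ⌈B⌉ with hzB
  have hFin : (Set.univ.pi (fun _ : Fin n => Set.Icc (-zB) zB)).Finite :=
    Set.Finite.pi fun _ => Set.finite_Icc _ _
  have hmaps : Set.MapsTo rT Set.univ (Set.univ.pi (fun _ : Fin n => Set.Icc (-zB) zB)) := by
    intro T _
    intro i _
    have hb := hrTbound T i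
    rw [abs_le] at hb
    have hceil : B ≤ (zB : ℝ) := Int.le_ceil B
    constructor
    · have : -(zB : ℝ) ≤ ((rT T i : ℤ) : ℝ) := by linarith [hb.1]
      exact_mod_cast this
    · have : ((rT T i : ℤ) : ℝ) ≤ (zB : ℝ) := by linarith [hb.2]
      exact_mod_cast this
  obtain ⟨T1, -, T2, -, hne, heq⟩ :=
    Set.infinite_univ.exists_ne_map_eq_of_mapsTo hmaps hFin
  obtain ⟨S1, S2, hS, heq'⟩ : ∃ S1 S2, S1 < S2 ∧ rT S1 = rT S2 := by
    rcases hne.lt_or_gt with h | h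
    · exact ⟨T1, T2, h, heq⟩
    · exact ⟨T2, T1, h, heq.symm⟩
  have hmono : ∀ j, g S1 j ≤ g S2 j := by
    intro j
    apply Nat.floor_le_floor
    apply mul_le_mul_of_nonneg_right _ (hlam0 j)
    exact_mod_cast Nat.mul_le_mul_left c hS.le
  refine ⟨fun j => g S2 j - g S1 j, ?_, ?_, ?_⟩
  · intro j hj
    have : lam j = 0 := hsupp j hj
    simp [hg, this]
  · -- nonzero at js
    have hkey : g S1 js + 2 ≤ g S2 js := by
      have hx1 : (0:ℝ) ≤ ((c * S1 : ℕ) : ℝ) * lam js :=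
        mul_nonneg (Nat.cast_nonneg _) hlamjs.le
    -- x2 ≥ x1 + 2
      have hx12 : ((c * S1 : ℕ) : ℝ) * lam js + (2:ℕ) ≤ ((c * S2 : ℕ) : ℝ) * lam js := by
        have hS2 : (S1:ℝ) + 1 ≤ (S2:ℝ) := by exact_mod_cast hS
        have hcc : (0:ℝ) ≤ (c:ℝ) := Nat.cast_nonneg c
        push_cast
        nlinarith [hlamjs.le]
      calc g S1 js + 2 = ⌊((c * S1 : ℕ) : ℝ) * lam js + (2:ℕ)⌋₊ := by
            rw [Nat.floor_add_natCast hx1]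
        _ ≤ g S2 js := Nat.floor_le_floor hx12
    intro h0
    have := congrFun h0 js
    simp only [Pi.zero_apply] at this
    omega
  · have hcast : ∀ j, ((g S2 j - g S1 j : ℕ) : ℤ) = (g S2 j : ℤ) - (g S1 j : ℤ) :=
      fun j => by exact_mod_cast Nat.cast_sub (hmono j)
    calc ∑ j, ((g S2 j - g S1 j : ℕ) : ℤ) • w j
        = ∑ j, ((g S2 j : ℤ) • w j - (g S1 j : ℤ) • w j) := by
          apply Finset.sum_congr rfl
          intro j _
          rw [hcast j, sub_smul]
      _ = rT S2 - rT S1 := by rw [Finset.sum_sub_distrib, hrT]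
      _ = 0 := by rw [heq']; ring


lemma sepBound (w : Fin N → Fin n → ℤ) (J : Finset (Fin N))
    (hQ : ¬ ∃ lam : Fin N → ℝ, (∀ j, 0 ≤ lam j) ∧ (∀ j ∉ J, lam j = 0) ∧
      (∑ j, lam j) = 1 ∧ ∑ j, lam j • WR w j = 0) :
    ∃ γ : ℝ, 0 ≤ γ ∧ ∀ (m : Fin n → ℤ) (k : Fin N → ℕ), (∀ j ∉ J, k j = 0) →
      m = ∑ j, (k j : ℤ) • w j → (∑ j, (k j : ℝ)) ≤ γ * (nrmZ m + 1) := by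
  classical
  set Λ : Set (Fin N → ℝ) :=
    {lam | (∀ j, lam j ∈ Set.Icc (0:ℝ) 1) ∧ (∀ j ∉ J, lam j = 0) ∧ ∑ j, lam j = 1} with hΛ
  set F : (Fin N → ℝ) → (Fin n → ℝ) := fun lam => ∑ j, lam j • WR w j with hF
  set Conv : Set (Fin n → ℝ) := F '' Λ with hConv
  -- convexity
  have hconv : Convex ℝ Conv := by
    intro x hx y hy a b ha hb hab
    obtain ⟨lam, ⟨hl1, hl2, hl3⟩, rfl⟩ := hx
    obtain ⟨mu, ⟨hm1, hm2, hm3⟩, rfl⟩ := hy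
    refine ⟨fun j => a * lam j + b * mu j, ⟨?_, ?_, ?_⟩, ?_⟩
    · intro j
      constructor
      · exact add_nonneg (mul_nonneg ha (hl1 j).1) (mul_nonneg hb (hm1 j).1)
      · calc a * lam j + b * mu j ≤ a * 1 + b * 1 := by
              apply add_le_add
              · exact mul_le_mul_of_nonneg_left (hl1 j).2 ha
              · exact mul_le_mul_of_nonneg_left (hm1 j).2 hb
          _ = 1 := by rw [mul_one, mul_one, hab]
    · intro j hj
      show a * lam j + b * mu j = 0
      rw [hl2 j hj, hm2 j hj]
      ring
    · rw [Finset.sum_add_distrib, ← Finset.mul_sum, ← Finset.mul_sum, hl3, hm3]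
      rw [mul_one, mul_one, hab]
    · simp only [hF]
      rw [Finset.smul_sum, Finset.smul_sum, ← Finset.sum_add_distrib]
      apply Finset.sum_congr rfl
      intro j _
      rw [smul_smul, smul_smul, ← add_smul]
  -- compactness
  have hΛcomp : IsCompact Λ := by
    have hsub : Λ ⊆ Set.univ.pi (fun _ : Fin N => Set.Icc (0:ℝ) 1) := by
      intro lam hlam i _
      exact hlam.1 i
    have hclosed : IsClosed Λ := by
      have h1 : IsClosed {lam : Fin N → ℝ | ∀ j, lam j ∈ Set.Icc (0:ℝ) 1} := by
        have : {lam : Fin N → ℝ | ∀ j, lam j ∈ Set.Icc (0:ℝ) 1}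
            = Set.univ.pi (fun _ : Fin N => Set.Icc (0:ℝ) 1) := by
          ext lam
          simp only [Set.mem_setOf_eq, Set.mem_pi, Set.mem_univ, true_implies]
        rw [this]
        exact isClosed_set_pi fun i _ => isClosed_Icc
      have h2 : IsClosed {lam : Fin N → ℝ | ∀ j ∉ J, lam j = 0} := by
        have : {lam : Fin N → ℝ | ∀ j ∉ J, lam j = 0}
            = ⋂ (j) (_ : j ∉ J), {lam : Fin N → ℝ | lam j = 0} := by
          ext lam; simp
        rw [this]
        exact isClosed_iInter fun j => isClosed_iInter fun _ =>
          isClosed_eq (continuous_apply j) continuous_const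
      have h3 : IsClosed {lam : Fin N → ℝ | ∑ j, lam j = 1} :=
        isClosed_eq (by continuity) continuous_const
      have : Λ = {lam : Fin N → ℝ | ∀ j, lam j ∈ Set.Icc (0:ℝ) 1}
          ∩ ({lam | ∀ j ∉ J, lam j = 0} ∩ {lam | ∑ j, lam j = 1}) := by
        ext lam
        simp only [hΛ, Set.mem_setOf_eq, Set.mem_inter_iff]
        try tauto
      rw [this]
      exact h1.inter (h2.inter h3)
    exact (isCompact_univ_pi fun _ => isCompact_Icc).of_isClosed_subset hclosed hsub
  have hFcont : Continuous F := by
    apply continuous_finset_sum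
    intro j _
    exact (continuous_apply j).smul continuous_const
  have hConvcomp : IsCompact Conv := hΛcomp.image hFcont
  -- 0 not in Conv
  have h0 : (0 : Fin n → ℝ) ∉ Conv := by
    intro h
    obtain ⟨lam, ⟨hl1, hl2, hl3⟩, hl4⟩ := h
    exact hQ ⟨lam, fun j => (hl1 j).1, hl2, hl3, hl4⟩
  obtain ⟨f, u, hfu, hub⟩ :=
    geometric_hahn_banach_point_closed hconv hConvcomp.isClosed h0
  have hu0 : 0 < u := by simpa using hfu
  -- W j ∈ Conv for j ∈ J
  have hWmem : ∀ j ∈ J, WR w j ∈ Conv := by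
    intro j hj
    refine ⟨fun j' => if j' = j then 1 else 0, ⟨?_, ?_, ?_⟩, ?_⟩
    · intro j'
      by_cases h : j' = j <;> simp [h]
    · intro j' hj'
      have : j' ≠ j := fun h => hj' (h ▸ hj)
      simp [this]
    · simp
    · simp only [hF, ite_smul, one_smul, zero_smul]
      simp
  refine ⟨‖f‖ / u, div_nonneg (norm_nonneg f) hu0.le, ?_⟩
  intro m k hk hm
  set M : Fin n → ℝ := fun i => (m i : ℝ) with hM
  have hMrep : M = ∑ j, (k j : ℝ) • WR w j := cast_rep w m k hm
  have hfM : f M = ∑ j, (k j : ℝ) * f (WR w j) := by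
    rw [hMrep, map_sum]
    apply Finset.sum_congr rfl
    intro j _
    rw [map_smul]
    rfl
  have hlow : u * (∑ j, (k j : ℝ)) ≤ f M := by
    rw [hfM, Finset.mul_sum]
    apply Finset.sum_le_sum
    intro j _
    by_cases hj : j ∈ J
    · rw [mul_comm]
      exact mul_le_mul_of_nonneg_left (hub _ (hWmem j hj)).le (Nat.cast_nonneg _)
    · rw [hk j hj]
      simp
  have hMnorm : ‖M‖ ≤ nrmZ m := by
    rw [pi_norm_le_iff_of_nonneg (nrmZ_nonneg m)]
    intro i
    rw [Real.norm_eq_abs]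
    exact abs_coord_le_nrmZ m i
  have hup : f M ≤ ‖f‖ * nrmZ m := by
    calc f M ≤ |f M| := le_abs_self _
      _ = ‖f M‖ := rfl
      _ ≤ ‖f‖ * ‖M‖ := f.le_opNorm M
      _ ≤ ‖f‖ * nrmZ m := mul_le_mul_of_nonneg_left hMnorm (norm_nonneg f)
  have hnn : 0 ≤ nrmZ m := nrmZ_nonneg m
  rw [div_mul_eq_mul_div, le_div_iff₀ hu0]
  nlinarith [norm_nonneg f]

lemma lemA (w : Fin N → Fin n → ℤ) (J : Finset (Fin N)) :
    ∃ γ : ℝ, 0 ≤ γ ∧ ∀ (m : Fin n → ℤ) (k : Fin N → ℕ), (∀ j ∉ J, k j = 0) →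
      m = ∑ j, (k j : ℤ) • w j →
      ∃ k' : Fin N → ℕ, m = ∑ j, (k' j : ℤ) • w j ∧ (∑ j, (k' j : ℝ)) ≤ γ * (nrmZ m + 1) := by
  classical
  induction J using Finset.strongInduction with
  | _ J IH =>
  by_cases hQ : ∃ lam : Fin N → ℝ, (∀ j, 0 ≤ lam j) ∧ (∀ j ∉ J, lam j = 0) ∧
      (∑ j, lam j) = 1 ∧ ∑ j, lam j • WR w j = 0
  · -- there is a convex relation: reduce to a smaller column set
    obtain ⟨lam, hl0, hlsupp, hlsum, hlrel⟩ := hQ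
    obtain ⟨h, hhsupp, hhne, hhrel⟩ := pigeon w J lam hl0 hlsupp hlsum hlrel
    have IH' : ∀ j : Fin N, ∃ γ', 0 ≤ γ' ∧ (j ∈ J → ∀ (m : Fin n → ℤ) (k : Fin N → ℕ),
        (∀ j' ∉ J.erase j, k j' = 0) → m = ∑ j', (k j' : ℤ) • w j' →
        ∃ k2 : Fin N → ℕ, m = ∑ j', (k2 j' : ℤ) • w j' ∧ (∑ j', (k2 j' : ℝ)) ≤ γ' * (nrmZ m + 1)) := by
      intro j
      by_cases hj : j ∈ J
      · obtain ⟨γ', h0, hP⟩ := IH (J.erase j) (Finset.erase_ssubset hj)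
        exact ⟨γ', h0, fun _ => hP⟩
      · exact ⟨0, le_refl 0, fun hc => absurd hc hj⟩
    choose γf hγf0 hγfP using IH'
    set Γ : ℝ := ∑ j, γf j with hΓ
    have hΓ0 : 0 ≤ Γ := Finset.sum_nonneg fun j _ => hγf0 j
    have hγle : ∀ j, γf j ≤ Γ :=
      fun j => Finset.single_le_sum (f := γf) (fun j _ => hγf0 j) (Finset.mem_univ j)
    set Hr : ℝ := ∑ j, (h j : ℝ) with hHr
    have hHr0 : 0 ≤ Hr := Finset.sum_nonneg fun j _ => Nat.cast_nonneg _
    set Rb : ℝ := ∑ j, nrmZ (w j) with hRb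
    have hRb0 : 0 ≤ Rb := Finset.sum_nonneg fun j _ => nrmZ_nonneg _
    refine ⟨Γ * (Hr * Rb + 1) + Hr, by positivity, ?_⟩
    intro m k hk hm
    have hTne : (Finset.univ.filter (fun j => h j ≠ 0)).Nonempty := by
      rcases Function.ne_iff.1 hhne with ⟨j, hj⟩
      exact ⟨j, by simpa using hj⟩
    obtain ⟨j1, hj1T, hj1min⟩ := Finset.exists_min_image _ (fun j => k j / h j) hTne
    have hj1h : h j1 ≠ 0 := by simpa using (Finset.mem_filter.1 hj1T).2
    have hj1J : j1 ∈ J := by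
      by_contra hc
      exact hj1h (hhsupp j1 hc)
    set t : ℕ := k j1 / h j1 with ht
    have hth : ∀ j, t * h j ≤ k j := by
      intro j
      by_cases hj : h j = 0
      · simp [hj]
      · have hmem : j ∈ Finset.univ.filter (fun j => h j ≠ 0) := by simp [hj]
        have h1 : t ≤ k j / h j := hj1min j hmem
        calc t * h j ≤ (k j / h j) * h j := Nat.mul_le_mul_right _ h1
          _ ≤ k j := Nat.div_mul_le_self _ _
    set k' : Fin N → ℕ := fun j => k j - t * h j with hk'
    have hk'cast : ∀ j, ((k' j : ℕ) : ℤ) = (k j : ℤ) - (t : ℤ) * (h j : ℤ) := by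
      intro j
      simp only [hk']
      rw [Nat.cast_sub (hth j)]
      push_cast
      ring
    have hk'm : m = ∑ j, (k' j : ℤ) • w j := by
      rw [hm, eq_comm]
      calc ∑ j, (k' j : ℤ) • w j
          = ∑ j, ((k j : ℤ) • w j - (t:ℤ) • ((h j : ℤ) • w j)) := by
            apply Finset.sum_congr rfl
            intro j _
            rw [hk'cast j, sub_smul, smul_smul]
        _ = ∑ j, (k j : ℤ) • w j - (t:ℤ) • ∑ j, (h j : ℤ) • w j := by
            rw [Finset.sum_sub_distrib, Finset.smul_sum]
        _ = ∑ j, (k j : ℤ) • w j := by rw [hhrel, smul_zero, sub_zero]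
    have hk'j1 : k' j1 < h j1 := by
      have h1 := Nat.div_add_mod (k j1) (h j1)
      have h2 := Nat.mod_lt (k j1) (Nat.pos_of_ne_zero hj1h)
      have h3 : (k j1 / h j1) * h j1 = h j1 * (k j1 / h j1) := Nat.mul_comm _ _
      simp only [hk', ht]
      omega
    set k'' : Fin N → ℕ := Function.update k' j1 0 with hk''
    have hsupp'' : ∀ j ∉ J.erase j1, k'' j = 0 := by
      intro j hj
      by_cases hjj : j = j1
      · subst hjj; simp [hk'']
      · have hjJ : j ∉ J := by
          intro hc
          exact hj (Finset.mem_erase.2 ⟨hjj, hc⟩)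
        have h1 : k j = 0 := hk j hjJ
        have h2 : h j = 0 := hhsupp j hjJ
        simp [hk'', Function.update_of_ne hjj, hk', h1, h2]
    set m' : Fin n → ℤ := m - (k' j1 : ℤ) • w j1 with hm'
    have hm'' : m' = ∑ j, (k'' j : ℤ) • w j := by
      have e1 : ∑ j, (k'' j : ℤ) • w j
          = (k'' j1 : ℤ) • w j1 + ∑ j ∈ Finset.univ.erase j1, (k'' j : ℤ) • w j :=
        (Finset.add_sum_erase _ _ (Finset.mem_univ j1)).symm
      have e2 : ∑ j, (k' j : ℤ) • w j
          = (k' j1 : ℤ) • w j1 + ∑ j ∈ Finset.univ.erase j1, (k' j : ℤ) • w j :=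
        (Finset.add_sum_erase _ _ (Finset.mem_univ j1)).symm
      have e3 : ∑ j ∈ Finset.univ.erase j1, (k'' j : ℤ) • w j
          = ∑ j ∈ Finset.univ.erase j1, (k' j : ℤ) • w j := by
        apply Finset.sum_congr rfl
        intro j hj
        rw [hk'', Function.update_of_ne (Finset.ne_of_mem_erase hj)]
      have e4 : (k'' j1 : ℤ) = 0 := by simp [hk'']
      rw [hm', hk'm, e1, e2, e3, e4, zero_smul, zero_add]
      abel
    obtain ⟨k3, hk3m, hk3b⟩ := hγfP j1 hj1J m' k'' hsupp'' hm''
    set kstar : Fin N → ℕ := fun j => k3 j + (if j = j1 then k' j1 else 0) with hkstar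
    have e5 : ∑ j, (if j = j1 then (k' j1 : ℤ) else 0) • w j = (k' j1 : ℤ) • w j1 := by
      have e : ∀ j, (if j = j1 then (k' j1 : ℤ) else 0) • w j
          = if j = j1 then (k' j1 : ℤ) • w j else 0 := by
        intro j
        by_cases hj : j = j1 <;> simp [hj]
      rw [Finset.sum_congr rfl (fun j _ => e j),
        Finset.sum_ite_eq' Finset.univ j1 (fun j => (k' j1 : ℤ) • w j)]
      simp
    refine ⟨kstar, ?_, ?_⟩
    · have e6 : ∑ j, (kstar j : ℤ) • w j
          = ∑ j, (k3 j : ℤ) • w j + ∑ j, (if j = j1 then (k' j1 : ℤ) else 0) • w j := by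
        rw [← Finset.sum_add_distrib]
        apply Finset.sum_congr rfl
        intro j _
        simp only [hkstar]
        rw [← add_smul]
        congr 1
        by_cases hj : j = j1 <;> simp [hj]
      rw [e6, e5, ← hk3m, hm']
      abel
    · have e7 : (∑ j, (kstar j : ℝ)) = (∑ j, (k3 j : ℝ)) + (k' j1 : ℝ) := by
        have e : ∀ j, ((kstar j : ℕ) : ℝ) = (k3 j : ℝ) + (if j = j1 then (k' j1 : ℝ) else 0) := by
          intro j
          simp only [hkstar]
          by_cases hj : j = j1 <;> simp [hj]
        rw [Finset.sum_congr rfl (fun j _ => e j), Finset.sum_add_distrib,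
          Finset.sum_ite_eq' Finset.univ j1 (fun _ => (k' j1 : ℝ))]
        simp
      have hk'le : (k' j1 : ℝ) ≤ Hr := by
        have h1 : k' j1 ≤ h j1 := le_of_lt hk'j1
        have h2 : (h j1 : ℝ) ≤ Hr :=
          Finset.single_le_sum (f := fun j => (h j : ℝ)) (fun j _ => Nat.cast_nonneg _)
            (Finset.mem_univ j1)
        calc (k' j1 : ℝ) ≤ (h j1 : ℝ) := by exact_mod_cast h1
          _ ≤ Hr := h2
      have hnm' : nrmZ m' ≤ nrmZ m + Hr * Rb := by
        have e8 : ∀ i, |(m' i : ℝ)| ≤ |(m i : ℝ)| + (k' j1 : ℝ) * |(w j1 i : ℝ)| := by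
          intro i
          have e9 : (m' i : ℝ) = (m i : ℝ) - (k' j1 : ℝ) * (w j1 i : ℝ) := by
            simp only [hm', Pi.sub_apply, Pi.smul_apply, smul_eq_mul]
            push_cast
            ring
          rw [e9]
          calc |(m i:ℝ) - (k' j1:ℝ)*(w j1 i:ℝ)|
              ≤ |(m i:ℝ)| + |(k' j1:ℝ)*(w j1 i:ℝ)| := abs_sub _ _
            _ = |(m i:ℝ)| + (k' j1:ℝ)*|(w j1 i:ℝ)| := by
                rw [abs_mul, abs_of_nonneg (show (0:ℝ) ≤ (k' j1 : ℝ) from Nat.cast_nonneg _)]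
        calc nrmZ m' ≤ ∑ i, (|(m i:ℝ)| + (k' j1:ℝ)*|(w j1 i:ℝ)|) :=
              Finset.sum_le_sum (fun i _ => e8 i)
          _ = nrmZ m + (k' j1:ℝ) * nrmZ (w j1) := by
              rw [Finset.sum_add_distrib, ← Finset.mul_sum]
              rfl
          _ ≤ nrmZ m + Hr * Rb := by
              have h3 : nrmZ (w j1) ≤ Rb :=
                Finset.single_le_sum (f := fun j => nrmZ (w j)) (fun j _ => nrmZ_nonneg _)
                  (Finset.mem_univ j1)
              have h4 := mul_le_mul hk'le h3 (nrmZ_nonneg _) hHr0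
              linarith
      rw [e7]
      have h0m : 0 ≤ nrmZ m := nrmZ_nonneg m
      have h0m' : 0 ≤ nrmZ m' := nrmZ_nonneg m'
      have hb1 : (∑ j, (k3 j:ℝ)) ≤ Γ * (nrmZ m' + 1) := by
        calc (∑ j, (k3 j:ℝ)) ≤ γf j1 * (nrmZ m' + 1) := hk3b
          _ ≤ Γ * (nrmZ m' + 1) :=
            mul_le_mul_of_nonneg_right (hγle j1) (by linarith)
      have hb2 : Γ * (nrmZ m' + 1) ≤ Γ * (nrmZ m + Hr * Rb + 1) :=
        mul_le_mul_of_nonneg_left (by linarith) hΓ0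
      have p1 : 0 ≤ Γ * (Hr * Rb) * nrmZ m := by positivity
      have p2 : 0 ≤ Hr * nrmZ m := by positivity
      nlinarith [hb1, hb2, hk'le, p1, p2]
  · -- no convex relation: Hahn-Banach separation
    obtain ⟨γ, hγ0, hγ⟩ := sepBound w J hQ
    exact ⟨γ, hγ0, fun m k hk hm => ⟨k, hm, hγ m k hk hm⟩⟩


end Stmt10Aux

section MoreAux
open Stmt10Aux

variable {n N : ℕ}

lemma polyBall (w : Fin N → Fin n → ℤ) (x : Fin n → ℝ) (hx : x ∈ poly n N w) :
    (∑ i, |x i|) ≤ ∑ j, nrmZ (w j) := by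
  classical
  set Rb : ℝ := ∑ j, nrmZ (w j) with hRb
  have hRb0 : 0 ≤ Rb := Finset.sum_nonneg fun j _ => nrmZ_nonneg _
  set Ball : Set (Fin n → ℝ) := {y | ∑ i, |y i| ≤ Rb} with hBall
  have hconv : Convex ℝ Ball := by
    intro y hy z hz a b ha hb hab
    show ∑ i, |a * y i + b * z i| ≤ Rb
    calc ∑ i, |a * y i + b * z i| ≤ ∑ i, (a * |y i| + b * |z i|) := by
          apply Finset.sum_le_sum
          intro i _
          calc |a * y i + b * z i| ≤ |a * y i| + |b * z i| := abs_add_le _ _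
            _ = a * |y i| + b * |z i| := by
                rw [abs_mul, abs_mul, abs_of_nonneg ha, abs_of_nonneg hb]
      _ = a * (∑ i, |y i|) + b * (∑ i, |z i|) := by
          rw [Finset.sum_add_distrib, ← Finset.mul_sum, ← Finset.mul_sum]
      _ ≤ a * Rb + b * Rb := by
          apply add_le_add
          · exact mul_le_mul_of_nonneg_left hy ha
          · exact mul_le_mul_of_nonneg_left hz hb
      _ = Rb := by rw [← add_mul, hab, one_mul]
  have hgen : insert 0 (Set.range fun j => fun i => ((w j i : ℤ) : ℝ)) ⊆ Ball := by
    intro y hy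
    rcases hy with rfl | ⟨j, rfl⟩
    · show ∑ i, |(0 : Fin n → ℝ) i| ≤ Rb
      simp [hRb0]
    · show ∑ i, |((w j i : ℤ) : ℝ)| ≤ Rb
      exact Finset.single_le_sum (f := fun j => nrmZ (w j)) (fun j _ => nrmZ_nonneg _)
        (Finset.mem_univ j)
  exact convexHull_min hgen hconv hx

lemma dg_nonneg (w : Fin N → Fin n → ℤ) (x : Fin n → ℝ) : 0 ≤ dg n N w x :=
  Real.sInf_nonneg fun _ ha => ha.1.le

lemma dgset_nonempty (w : Fin N → Fin n → ℤ) (m : Fin n → ℤ) (k : Fin N → ℕ)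
    (hm : m = ∑ j, (k j : ℤ) • w j) :
    {a : ℝ | 0 < a ∧ (fun i => ((m i : ℤ) : ℝ)) ∈ a • poly n N w}.Nonempty := by
  classical
  set S : ℝ := ∑ j, (k j : ℝ) with hS
  have hS0 : 0 ≤ S := Finset.sum_nonneg fun j _ => Nat.cast_nonneg _
  set a0 : ℝ := S + 1 with ha0
  have ha0pos : 0 < a0 := by linarith
  refine ⟨a0, ha0pos, ?_⟩
  rw [Set.mem_smul_set_iff_inv_smul_mem₀ (ne_of_gt ha0pos)]
  have hM : (fun i => ((m i : ℤ) : ℝ)) = ∑ j, (k j : ℝ) • WR w j := cast_rep w m k hm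
  set μ : Option (Fin N) → ℝ := fun o => Option.elim o (1 - S / a0) (fun j => (k j : ℝ) / a0)
    with hμ
  set z : Option (Fin N) → (Fin n → ℝ) := fun o => Option.elim o 0 (WR w) with hz
  have hmem : ∑ o : Option (Fin N), μ o • z o ∈ poly n N w := by
    apply Convex.sum_mem (convex_convexHull ℝ _)
    · intro o _
      rcases o with _ | j
      · show 0 ≤ 1 - S / a0
        have : S / a0 ≤ 1 := by
          rw [div_le_one ha0pos]
          linarith
        linarith
      · exact div_nonneg (Nat.cast_nonneg _) ha0pos.le
    · rw [Fintype.sum_option]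
      show (1 - S / a0) + (∑ j, (k j : ℝ) / a0) = 1
      rw [← Finset.sum_div, ← hS]
      ring
    · intro o _
      rcases o with _ | j
      · exact subset_convexHull ℝ _ (Set.mem_insert _ _)
      · exact subset_convexHull ℝ _ (Set.mem_insert_of_mem _ ⟨j, rfl⟩)
  have hval : ∑ o : Option (Fin N), μ o • z o = a0⁻¹ • (fun i => ((m i : ℤ) : ℝ)) := by
    rw [Fintype.sum_option]
    show (1 - S / a0) • (0 : Fin n → ℝ) + (∑ j, ((k j : ℝ) / a0) • WR w j) = _
    rw [smul_zero, zero_add, hM, Finset.smul_sum]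
    apply Finset.sum_congr rfl
    intro j _
    rw [smul_smul, div_eq_inv_mul]
  rw [← hval]
  exact hmem

lemma nrm_le_dg (w : Fin N → Fin n → ℤ) (m : Fin n → ℤ) (k : Fin N → ℕ)
    (hm : m = ∑ j, (k j : ℤ) • w j) :
    nrmZ m ≤ (dg n N w (fun i => ((m i : ℤ) : ℝ)) + 1) * (∑ j, nrmZ (w j)) := by
  classical
  set Rb : ℝ := ∑ j, nrmZ (w j) with hRb
  have hRb0 : 0 ≤ Rb := Finset.sum_nonneg fun j _ => nrmZ_nonneg _
  have hne := dgset_nonempty w m k hm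
  obtain ⟨a, ⟨hapos, haM⟩, halt⟩ := Real.lt_sInf_add_pos hne one_pos
  have hdg : sInf {a : ℝ | 0 < a ∧ (fun i => ((m i : ℤ) : ℝ)) ∈ a • poly n N w}
      = dg n N w (fun i => ((m i : ℤ) : ℝ)) := rfl
  rw [hdg] at halt
  obtain ⟨x, hx, hax⟩ := haM
  have h1 : nrmZ m = a * ∑ i, |x i| := by
    unfold nrmZ
    rw [Finset.mul_sum]
    apply Finset.sum_congr rfl
    intro i _
    have : ((m i : ℤ) : ℝ) = a * x i := by
      have := congrFun hax i
      simpa using this.symm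
    rw [this, abs_mul, abs_of_pos hapos]
  rw [h1]
  calc a * ∑ i, |x i| ≤ a * Rb :=
        mul_le_mul_of_nonneg_left (polyBall w x hx) hapos.le
    _ ≤ (dg n N w (fun i => ((m i : ℤ) : ℝ)) + 1) * Rb :=
        mul_le_mul_of_nonneg_right halt.le hRb0

lemma repBound (n N : ℕ) (w : Fin N → Fin n → ℤ) :
    ∃ α : ℝ, 1 ≤ α ∧ ∀ m : Fin n → ℤ, (∃ k : Fin N → ℕ, m = ∑ j, (k j : ℤ) • w j) →
      ∃ k' : Fin N → ℕ, m = ∑ j, (k' j : ℤ) • w j ∧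
        (∑ j, (k' j : ℝ)) ≤ α * (dg n N w (fun i => ((m i : ℤ) : ℝ)) + 1) := by
  classical
  obtain ⟨γ, hγ0, hγ⟩ := lemA w Finset.univ
  set Rb : ℝ := ∑ j, nrmZ (w j) with hRb
  have hRb0 : 0 ≤ Rb := Finset.sum_nonneg fun j _ => nrmZ_nonneg _
  refine ⟨max 1 (γ * (Rb + 1)), le_max_left _ _, ?_⟩
  intro m hm
  obtain ⟨k, hk⟩ := hm
  obtain ⟨k', hk'm, hk'b⟩ := hγ m k (fun j hj => absurd (Finset.mem_univ j) hj) hk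
  refine ⟨k', hk'm, ?_⟩
  set d : ℝ := dg n N w (fun i => ((m i : ℤ) : ℝ)) with hd
  have hd0 : 0 ≤ d := dg_nonneg w _
  have h1 : nrmZ m ≤ (d + 1) * Rb := nrm_le_dg w m k hk
  have h2 : γ * (nrmZ m + 1) ≤ γ * ((d + 1) * Rb + 1) := by
    apply mul_le_mul_of_nonneg_left _ hγ0
    linarith
  have h3 : (d + 1) * Rb + 1 ≤ (Rb + 1) * (d + 1) := by nlinarith
  have h4 : γ * ((d + 1) * Rb + 1) ≤ γ * ((Rb + 1) * (d + 1)) :=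
    mul_le_mul_of_nonneg_left h3 hγ0
  have h5 : γ * ((Rb + 1) * (d + 1)) = (γ * (Rb + 1)) * (d + 1) := by ring
  have h6 : (γ * (Rb + 1)) * (d + 1) ≤ (max 1 (γ * (Rb + 1))) * (d + 1) :=
    mul_le_mul_of_nonneg_right (le_max_right _ _) (by linarith)
  linarith

end MoreAux


/-- The `K`-algebra homomorphism `φ : K⟨x,y⟩^† → L^{†′}` determined by `x_i ↦ x_i` and
`y_j ↦ t^{w_j}` is surjective. -/
theorem stmt10 (n N : ℕ) (w : Fin N → Fin n → ℤ)
    (K : Type*) [NormedField K] [CompleteSpace K] [IsUltrametricDist K] :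
    ∀ a : Ser n N K, memL' n N w a →
      ∃ b : (Fin N → ℕ) × (Fin N → ℕ) → K, memKxy N b ∧ phiMap n N w b = a := by
  classical
  intro a ha
  obtain ⟨hsupp, r, s, hr, hs, C, hC⟩ := ha
  obtain ⟨α, hα1, hα⟩ := repBound n N w
  have hα0 : (0:ℝ) < α := lt_of_lt_of_le one_pos hα1
  have hs0 : (0:ℝ) < s := lt_trans one_pos hs
  have hr0 : (0:ℝ) < r := lt_trans one_pos hr
  have hC0 : 0 ≤ C := by
    refine le_trans ?_ (hC 0 0)
    have h1 : (0:ℝ) ≤ ‖a (0, 0)‖ := norm_nonneg _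
    have h2 : (0:ℝ) ≤ r ^ (∑ j : Fin N, (0 : Fin N → ℕ) j) := pow_nonneg hr0.le _
    have h3 : (0:ℝ) ≤ s ^ dg n N w (fun i => (((0 : Fin n → ℤ) i : ℤ) : ℝ)) :=
      Real.rpow_nonneg hs0.le _
    positivity
  have key : ∀ m : Fin n → ℤ, ∃ k' : Fin N → ℕ,
      (∃ k : Fin N → ℕ, m = ∑ j, (k j : ℤ) • w j) →
      (m = ∑ j, (k' j : ℤ) • w j ∧
        (∑ j, (k' j : ℝ)) ≤ α * (dg n N w (fun i => ((m i : ℤ) : ℝ)) + 1)) := by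
    intro m
    by_cases hm : ∃ k : Fin N → ℕ, m = ∑ j, (k j : ℤ) • w j
    · obtain ⟨k', h1, h2⟩ := hα m hm
      exact ⟨k', fun _ => ⟨h1, h2⟩⟩
    · exact ⟨0, fun hc => absurd hc hm⟩
  choose rep hrep using key
  set b : (Fin N → ℕ) × (Fin N → ℕ) → K := fun uv =>
    if rep (∑ j, (uv.2 j : ℤ) • w j) = uv.2 then a (uv.1, ∑ j, (uv.2 j : ℤ) • w j) else 0
    with hb
  refine ⟨b, ?_, ?_⟩
  · -- membership in K⟨x,y⟩†
    refine ⟨r, s ^ (α⁻¹ : ℝ), hr, ?_, C * s, ?_⟩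
    · rw [Real.one_lt_rpow_iff hs0.le]
      exact Or.inl ⟨hs, inv_pos.2 hα0⟩
    · intro u v
      by_cases hv : rep (∑ j, (v j : ℤ) • w j) = v
      · set m : Fin n → ℤ := ∑ j, (v j : ℤ) • w j with hmdef
        set d : ℝ := dg n N w (fun i => ((m i : ℤ) : ℝ)) with hd
        have hd0 : 0 ≤ d := dg_nonneg w _
        have hbval : b (u, v) = a (u, m) := by
          simp only [hb]
          rw [← hmdef, if_pos hv]
        obtain ⟨-, hbd⟩ := hrep m ⟨v, hmdef⟩
        rw [hv] at hbd
        have hT : ((∑ j, v j : ℕ) : ℝ) ≤ α * (d + 1) := by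
          rw [Nat.cast_sum]
          exact hbd
        have hexp : α⁻¹ * ((∑ j, v j : ℕ) : ℝ) ≤ d + 1 := by
          have h1 : α⁻¹ * ((∑ j, v j : ℕ) : ℝ) ≤ α⁻¹ * (α * (d + 1)) :=
            mul_le_mul_of_nonneg_left hT (inv_nonneg.2 hα0.le)
          rwa [← mul_assoc, inv_mul_cancel₀ (ne_of_gt hα0), one_mul] at h1
        have hpow : (s ^ (α⁻¹ : ℝ)) ^ (∑ j, v j) ≤ s ^ d * s := by
          have e1 : (s ^ (α⁻¹ : ℝ)) ^ (∑ j, v j)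
              = s ^ (α⁻¹ * ((∑ j, v j : ℕ) : ℝ)) := by
            rw [← Real.rpow_natCast (s ^ (α⁻¹ : ℝ)) (∑ j, v j), ← Real.rpow_mul hs0.le]
          have e2 : s ^ (α⁻¹ * ((∑ j, v j : ℕ) : ℝ)) ≤ s ^ (d + 1) :=
            Real.rpow_le_rpow_of_exponent_le hs.le hexp
          have e3 : s ^ (d + (1:ℝ)) = s ^ d * s := by
            rw [Real.rpow_add hs0, Real.rpow_one]
          rw [e1]
          rw [e3] at e2
          exact e2
        have hbase : (0:ℝ) ≤ ‖a (u, m)‖ * r ^ (∑ j, u j) :=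
          mul_nonneg (norm_nonneg _) (pow_nonneg hr0.le _)
        calc ‖b (u, v)‖ * r ^ (∑ j, u j) * (s ^ (α⁻¹ : ℝ)) ^ (∑ j, v j)
            = (‖a (u, m)‖ * r ^ (∑ j, u j)) * ((s ^ (α⁻¹ : ℝ)) ^ (∑ j, v j)) := by
              rw [hbval]
          _ ≤ (‖a (u, m)‖ * r ^ (∑ j, u j)) * (s ^ d * s) :=
              mul_le_mul_of_nonneg_left hpow hbase
          _ = (‖a (u, m)‖ * r ^ (∑ j, u j) * s ^ d) * s := by ring
          _ ≤ C * s := mul_le_mul_of_nonneg_right (hC u m) hs0.le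
      · have hbz : b (u, v) = 0 := by
          simp only [hb]
          rw [if_neg hv]
        rw [hbz, norm_zero, zero_mul, zero_mul]
        positivity
  · -- phiMap b = a
    funext um
    obtain ⟨u, m⟩ := um
    show (∑' v : Fin N → ℕ, if (∑ j, (v j : ℤ) • w j) = m then b (u, v) else 0) = a (u, m)
    by_cases hm : ∃ k : Fin N → ℕ, m = ∑ j, (k j : ℤ) • w j
    · obtain ⟨hrepeq, -⟩ := hrep m hm
      have h1 : ∀ v, v ≠ rep m →
          (if (∑ j, (v j : ℤ) • w j) = m then b (u, v) else 0) = 0 := by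
        intro v hvne
        by_cases hvm : (∑ j, (v j : ℤ) • w j) = m
        · rw [if_pos hvm]
          simp only [hb]
          rw [hvm, if_neg (fun hc => hvne hc.symm)]
        · rw [if_neg hvm]
      rw [tsum_eq_single (rep m) h1]
      have hcond : (∑ j, ((rep m) j : ℤ) • w j) = m := hrepeq.symm
      rw [if_pos hcond]
      simp only [hb]
      rw [hcond, if_pos rfl]
    · have h1 : ∀ v : Fin N → ℕ,
          (if (∑ j, (v j : ℤ) • w j) = m then b (u, v) else 0) = 0 :=
        fun v => if_neg (fun hc => hm ⟨v, hc.symm⟩)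
      have h2 : a (u, m) = 0 := by
        by_contra h3
        exact hm (hsupp u m h3)
      rw [h2]
      calc (∑' v : Fin N → ℕ, if (∑ j, (v j : ℤ) • w j) = m then b (u, v) else 0)
          = ∑' _v : Fin N → ℕ, (0:K) := by
            apply tsum_congr
            intro v
            exact h1 v
        _ = 0 := tsum_zero
end
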